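/- Invariance of the second exchange invariant along an A_m⁽¹⁾ X-variable sequence: if r : ℤ → F is a sequence of nonzero elements satisfying r(j+1) = (1 + x₁(j))·r(j) for all j ∈ ℤ, then the quantity r(j)·r(j−m+1)·x₁(j)·N(j) is independent of j, i.e. r(j)·r(j−m+1)·x₁(j)·N(j) = r(k)·r(k−m+1)·x₁(k)·N(k) for all j, k ∈ ℤ. -/

import Mathlib

/-- The nested expression `x_{m+1-k}(j)·(1 + x_{m+2-k}(j)·(1 + ⋯ x_m(j)·(1 + x_{m+1}(j))⋯))`
built from the X-variables `x i j`; `nestAux x m j (m-1)` is the expression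
`N(j) = x₂(j)·(1 + x₃(j)·(1 + ⋯ x_m(j)·(1 + x_{m+1}(j))⋯))`. -/
def nestAux {F : Type*} [Field F] (x : ℕ → ℤ → F) (m : ℕ) (j : ℤ) : ℕ → F
  | 0 => x (m + 1) j
  | k + 1 => x (m - k) j * (1 + nestAux x m j k)

/-- Invariance of the second exchange invariant along an `A_m⁽¹⁾` X-variable sequence. -/
theorem am1_second_invariant {F : Type*} [Field F] (m : ℕ) (hm : 2 ≤ m)
    (x : ℕ → ℤ → F)
    (hx₁ : ∀ j : ℤ, x 1 j ≠ 0) (hx₁' : ∀ j : ℤ, 1 + x 1 j ≠ 0)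
    (hmutA : ∀ j : ℤ, x 1 (j + 1) * (1 + x 1 j) = x 2 j * x 1 j)
    (hmutB : ∀ j : ℤ, x m (j + 1) * (1 + x 1 j) = x (m + 1) j * x 1 j)
    (hmutC : ∀ j : ℤ, x (m + 1) (j + 1) * x 1 j = 1)
    (hmutD : ∀ j : ℤ, ∀ i : ℕ, 2 ≤ i → i ≤ m - 1 → x i (j + 1) = x (i + 1) j)
    (r : ℤ → F) (hr : ∀ j : ℤ, r j ≠ 0)
    (hrec : ∀ j : ℤ, r (j + 1) = (1 + x 1 j) * r j) :
    ∀ j k : ℤ, r j * r (j - m + 1) * x 1 j * nestAux x m j (m - 1)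
      = r k * r (k - m + 1) * x 1 k * nestAux x m k (m - 1) := by
  obtain ⟨n, rfl⟩ : ∃ n, m = n + 2 := ⟨m - 2, by omega⟩
  -- shift lemma
  have shift : ∀ (k : ℕ), k ≤ n → ∀ j : ℤ,
      nestAux x (n + 2) (j + 1) (k + 1) = nestAux x (n + 2) j k := by
    intro k
    induction k with
    | zero =>
      intro _ j
      show x (n + 2 - 0) (j + 1) * (1 + x (n + 2 + 1) (j + 1)) = x (n + 2 + 1) j
      have hB := hmutB j
      have hC := hmutC j
      have h1 := hx₁ j
      have h1' := hx₁' j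
      apply mul_right_cancel₀ (mul_ne_zero h1 h1')
      simp only [Nat.sub_zero]
      linear_combination (x 1 j * (1 + x (n + 2 + 1) (j + 1))) * hB
        + (x (n + 2 + 1) j * x 1 j) * hC
    | succ k ih =>
      intro hk j
      have hk' : k ≤ n := by omega
      show x (n + 2 - (k + 1)) (j + 1) * (1 + nestAux x (n + 2) (j + 1) (k + 1))
          = x (n + 2 - k) j * (1 + nestAux x (n + 2) j k)
      rw [ih hk' j]
      have hD := hmutD j (n + 2 - (k + 1)) (by omega) (by omega)
      rw [hD]
      congr 2
      omega
  -- closed form of inner nest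
  have inner : ∀ (k : ℕ), k ≤ n → ∀ j : ℤ,
      nestAux x (n + 2) j k = x (n + 2 + 1) (j - k) := by
    intro k
    induction k with
    | zero => intro _ j; simp [nestAux]
    | succ k ih =>
      intro hk j
      have : nestAux x (n + 2) j (k + 1) = nestAux x (n + 2) (j - 1) k := by
        have := shift k (by omega) (j - 1)
        simpa using this
      rw [this, ih (by omega) (j - 1)]
      congr 1
      push_cast
      ring
  have key : ∀ j : ℤ, x 1 (j - (n + 1)) * nestAux x (n + 2) j n = 1 := by
    intro j
    rw [inner n le_rfl j]
    have := hmutC (j - (n + 1))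
    have e : j - (n + 1) + 1 = j - n := by push_cast; ring
    rw [e] at this
    linear_combination this
  -- one-step invariance
  have step : ∀ j : ℤ,
      r (j + 1) * r (j + 1 - (n + 2 : ℕ) + 1) * x 1 (j + 1) * nestAux x (n + 2) (j + 1) (n + 2 - 1)
        = r j * r (j - (n + 2 : ℕ) + 1) * x 1 j * nestAux x (n + 2) j (n + 2 - 1) := by
    intro j
    have hnest1 : nestAux x (n + 2) (j + 1) (n + 2 - 1) = nestAux x (n + 2) j n := by
      have : (n + 2 - 1 : ℕ) = n + 1 := by omega
      rw [this]
      exact shift n le_rfl j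
    have hnest2 : nestAux x (n + 2) j (n + 2 - 1) = x 2 j * (1 + nestAux x (n + 2) j n) := by
      have : (n + 2 - 1 : ℕ) = n + 1 := by omega
      rw [this]
      show x (n + 2 - n) j * _ = _
      congr 2
      omega
    set a : ℤ := j - (n + 2 : ℕ) + 1 with ha
    have ea : j + 1 - (n + 2 : ℕ) + 1 = a + 1 := by rw [ha]; ring
    have ea2 : a = j - (n + 1) := by rw [ha]; push_cast; ring
    rw [hnest1, hnest2, ea, hrec j, hrec a]
    set M := nestAux x (n + 2) j n with hM
    have hkey : x 1 a * M = 1 := by rw [ea2]; exact key j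
    have hA := hmutA j
    have h1' := hx₁' j
    -- goal: (1+x1 j)*r j * ((1+x1 a)*r a) * x1 (j+1) * M = r j * r a * x1 j * (x2 j * (1+M))
    have cancel : ∀ u v : F, u * (1 + x 1 j) = v * (1 + x 1 j) → u = v :=
      fun u v h => mul_right_cancel₀ h1' h
    apply cancel
    calc (1 + x 1 j) * r j * ((1 + x 1 a) * r a) * x 1 (j + 1) * M * (1 + x 1 j)
        = (1 + x 1 j) * r j * ((1 + x 1 a) * r a) * (x 1 (j + 1) * (1 + x 1 j)) * M := by ring
      _ = (1 + x 1 j) * r j * ((1 + x 1 a) * r a) * (x 2 j * x 1 j) * M := by rw [hA]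
      _ = (1 + x 1 j) * r j * r a * x 2 j * x 1 j * (M + x 1 a * M) := by ring
      _ = (1 + x 1 j) * r j * r a * x 2 j * x 1 j * (M + 1) := by rw [hkey]
      _ = r j * r a * x 1 j * (x 2 j * (1 + M)) * (1 + x 1 j) := by ring
  -- conclude by integer induction
  have toZero : ∀ j : ℤ,
      r j * r (j - (n + 2 : ℕ) + 1) * x 1 j * nestAux x (n + 2) j (n + 2 - 1)
        = r 0 * r (0 - (n + 2 : ℕ) + 1) * x 1 0 * nestAux x (n + 2) 0 (n + 2 - 1) := by
    intro j
    induction j using Int.induction_on with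
    | zero => rfl
    | succ i ih => rw [step i]; exact ih
    | pred i ih =>
      have := step (-(i : ℤ) - 1)
      rw [show -(i : ℤ) - 1 + 1 = -i by ring] at this
      rw [← this]
      exact ih
  intro j k
  rw [toZero j, toZero k]
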